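/- Let d, m ∈ ℕ, let k ∈ ℕ with k ≥ 3, let τ ∈ ℕ₀, μ > 0, N ≥ 1 and C₀ > 0. Let Ω₁ ⊆ ℝ^d and Ω₂ ⊆ ℝ^m be open, bounded and convex, let f : closure(Ω₁) → ℝ^m be k-times continuously differentiable with Range(f) ⊆ Ω₂, and let g : closure(Ω₂) → ℝ be k-times continuously differentiable. If |f|_{W^{l,∞}(Ω₁)} ≤ C₀·N^{l + μ·max{0, l−τ}} for all l = 1,…,k, then there is a constant C = C(d, m, k, C₀) > 0, independent of N, μ, f and g, such that |g ∘ f|_{W^{k,∞}(Ω₁)} ≤ C·(∑_{l=1}^k |g|_{W^{l,∞}(Ω₂)})·N^{k + μ·max{0, k−τ}}. -/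

import Mathlib

/-- Iterated partial derivative `D^α` in the directions listed in `u` (a multi-index `α`
with `|α| = u.length`). -/
noncomputable def multiDeriv {d : ℕ} : List (Fin d) → ((Fin d → ℝ) → ℝ) → ((Fin d → ℝ) → ℝ)
  | [], f => f
  | i :: u, f => fun x => fderiv ℝ (multiDeriv u f) x (Pi.single i 1)

lemma multiDeriv_ofFn {d k : ℕ} {s : Set (Fin d → ℝ)} (hs : IsOpen s)
    {h : (Fin d → ℝ) → ℝ} (hh : ContDiffOn ℝ (k : ℕ) h s) :
    ∀ n : ℕ, n ≤ k → ∀ p : Fin n → Fin d, ∀ x ∈ s,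
      multiDeriv (List.ofFn p) h x
        = iteratedFDeriv ℝ n h x (fun j => Pi.single (p j) 1) := by
  intro n
  induction n with
  | zero =>
    intro _ p x hx
    simp [multiDeriv, List.ofFn_zero]
  | succ n IH =>
    intro hn p x hx
    have hn' : n ≤ k := Nat.le_of_succ_le hn
    rw [List.ofFn_succ]
    show fderiv ℝ (multiDeriv (List.ofFn fun j => p j.succ) h) x (Pi.single (p 0) 1) = _
    have hdiff : DifferentiableAt ℝ (iteratedFDeriv ℝ n h) x := by
      have h1 : DifferentiableOn ℝ (iteratedFDerivWithin ℝ n h s) s :=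
        hh.differentiableOn_iteratedFDerivWithin (by exact_mod_cast hn) hs.uniqueDiffOn
      have h2 : DifferentiableAt ℝ (iteratedFDerivWithin ℝ n h s) x :=
        (h1 x hx).differentiableAt (hs.mem_nhds hx)
      have hev : iteratedFDerivWithin ℝ n h s =ᶠ[nhds x] iteratedFDeriv ℝ n h :=
        Filter.eventuallyEq_of_mem (hs.mem_nhds hx) (iteratedFDerivWithin_of_isOpen n hs)
      exact hev.differentiableAt_iff.mp h2
    have hev : multiDeriv (List.ofFn fun j => p j.succ) h =ᶠ[nhds x]
        (fun y => iteratedFDeriv ℝ n h y (fun j => Pi.single (p j.succ) 1)) :=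
      Filter.eventuallyEq_of_mem (hs.mem_nhds hx) (fun y hy => IH hn' _ y hy)
    rw [hev.fderiv_eq]
    have hcomp : (fun y => iteratedFDeriv ℝ n h y (fun j => Pi.single (p j.succ) 1))
        = (ContinuousMultilinearMap.apply ℝ (fun _ : Fin n => (Fin d → ℝ)) ℝ
            (fun j => Pi.single (p j.succ) 1)) ∘ (iteratedFDeriv ℝ n h) := rfl
    rw [hcomp, fderiv_comp x (ContinuousLinearMap.differentiableAt _) hdiff,
      ContinuousLinearMap.fderiv]
    rw [iteratedFDeriv_succ_apply_left]
    rfl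

lemma abs_multiDeriv_le_norm {d k : ℕ} {s : Set (Fin d → ℝ)} (hs : IsOpen s)
    {h : (Fin d → ℝ) → ℝ} (hh : ContDiffOn ℝ (k : ℕ) h s) (u : List (Fin d))
    (hu : u.length ≤ k) {x : Fin d → ℝ} (hx : x ∈ s) :
    |multiDeriv u h x| ≤ ‖iteratedFDeriv ℝ u.length h x‖ := by
  have key := multiDeriv_ofFn hs hh u.length hu u.get x hx
  rw [List.ofFn_get] at key
  rw [key, ← Real.norm_eq_abs]
  calc ‖iteratedFDeriv ℝ u.length h x (fun j => Pi.single (u.get j) 1)‖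
      ≤ ‖iteratedFDeriv ℝ u.length h x‖ * ∏ j, ‖(Pi.single (u.get j) 1 : Fin d → ℝ)‖ :=
        (iteratedFDeriv ℝ u.length h x).le_opNorm _
    _ = ‖iteratedFDeriv ℝ u.length h x‖ := by
        simp [Pi.norm_single]

lemma cmm_norm_le_of_basis {m n : ℕ}
    (A : ContinuousMultilinearMap ℝ (fun _ : Fin n => (Fin m → ℝ)) ℝ)
    {M : ℝ} (hM : 0 ≤ M)
    (hA : ∀ p : Fin n → Fin m, ‖A (fun j => Pi.single (p j) 1)‖ ≤ M) :
    ‖A‖ ≤ (m : ℝ) ^ n * M := by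
  apply A.opNorm_le_bound (by positivity)
  intro v
  have expand : (fun j => v j)
      = fun j => ∑ i : Fin m, v j i • (Pi.single i 1 : Fin m → ℝ) := by
    funext j
    funext r
    simp [Finset.sum_apply, Pi.single_apply, mul_ite]
  calc ‖A v‖ = ‖A (fun j => ∑ i : Fin m, v j i • (Pi.single i 1 : Fin m → ℝ))‖ := by
        rw [← expand]
    _ = ‖∑ p : Fin n → Fin m, A (fun j => v j (p j) • (Pi.single (p j) 1 : Fin m → ℝ))‖ := by
        have := A.toMultilinearMap.map_sum (g := fun j i => v j i • (Pi.single i 1 : Fin m → ℝ))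
        simp only [ContinuousMultilinearMap.coe_coe] at this
        rw [this]
    _ ≤ ∑ p : Fin n → Fin m, ‖A (fun j => v j (p j) • (Pi.single (p j) 1 : Fin m → ℝ))‖ :=
        norm_sum_le _ _
    _ ≤ ∑ _p : Fin n → Fin m, M * ∏ j, ‖v j‖ := by
        apply Finset.sum_le_sum
        intro p _
        have hsm : A (fun j => v j (p j) • (Pi.single (p j) 1 : Fin m → ℝ))
            = (∏ j, v j (p j)) • A (fun j => Pi.single (p j) 1) :=
          A.toMultilinearMap.map_smul_univ _ _
        rw [hsm, norm_smul]
        have h1 : ‖∏ j, v j (p j)‖ ≤ ∏ j, ‖v j‖ := by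
          rw [norm_prod]
          exact Finset.prod_le_prod (fun j _ => norm_nonneg _)
            (fun j _ => norm_le_pi_norm (v j) (p j))
        calc ‖∏ j, v j (p j)‖ * ‖A (fun j => Pi.single (p j) 1)‖
            ≤ (∏ j, ‖v j‖) * M := by
              apply mul_le_mul h1 (hA p) (norm_nonneg _)
              exact Finset.prod_nonneg fun j _ => norm_nonneg _
          _ = M * ∏ j, ‖v j‖ := mul_comm _ _
    _ = (m : ℝ) ^ n * M * ∏ j, ‖v j‖ := by
        rw [Finset.sum_const, Finset.card_univ, Fintype.card_fun]
        simp [Fintype.card_fin, mul_assoc]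

lemma key_exp (i k τ : ℕ) (hik : i ≤ k) :
    (k : ℝ) * max 0 ((i : ℝ) - τ) ≤ (i : ℝ) * max 0 ((k : ℝ) - τ) := by
  rcases le_or_gt (i : ℝ) (τ : ℝ) with h | h
  · rw [max_eq_left (by linarith)]
    have : (0:ℝ) ≤ (i : ℝ) * max 0 ((k : ℝ) - τ) := by positivity
    simpa using this
  · have hik' : (i : ℝ) ≤ (k : ℝ) := by exact_mod_cast hik
    have hτ : (0:ℝ) ≤ (τ:ℝ) := by positivity
    rw [max_eq_right (by linarith), max_eq_right (by linarith)]
    nlinarith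

theorem chain_rule_seminorm_estimate
    (d m : ℕ) (hd : 0 < d) (hm : 0 < m) (k : ℕ) (hk : 3 ≤ k)
    (C₀ : ℝ) (hC₀ : 0 < C₀) :
    ∃ C : ℝ, 0 < C ∧
      ∀ (τ : ℕ) (μ N : ℝ), 0 < μ → 1 ≤ N →
      ∀ (Ω₁ : Set (Fin d → ℝ)) (Ω₂ : Set (Fin m → ℝ)),
        IsOpen Ω₁ → Bornology.IsBounded Ω₁ → Convex ℝ Ω₁ →
        IsOpen Ω₂ → Bornology.IsBounded Ω₂ → Convex ℝ Ω₂ →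
      ∀ (f : (Fin d → ℝ) → (Fin m → ℝ)) (g : (Fin m → ℝ) → ℝ),
        ContDiffOn ℝ (k : ℕ) f (closure Ω₁) →
        ContDiffOn ℝ (k : ℕ) g (closure Ω₂) →
        f '' closure Ω₁ ⊆ Ω₂ →
        (∀ l : ℕ, 1 ≤ l → l ≤ k → ∀ i : Fin m, ∀ u : List (Fin d), u.length = l →
          ∀ x ∈ Ω₁, |multiDeriv u (fun y => f y i) x| ≤
            C₀ * N ^ ((l : ℝ) + μ * max 0 ((l : ℝ) - (τ : ℝ)))) →
        ∀ Mg : ℕ → ℝ,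
          (∀ l : ℕ, 1 ≤ l → l ≤ k → ∀ u : List (Fin m), u.length = l →
            ∀ y ∈ Ω₂, |multiDeriv u g y| ≤ Mg l) →
          ∀ u : List (Fin d), u.length = k → ∀ x ∈ Ω₁,
            |multiDeriv u (g ∘ f) x| ≤
              C * (∑ l ∈ Finset.Icc 1 k, Mg l) *
                N ^ ((k : ℝ) + μ * max 0 ((k : ℝ) - (τ : ℝ))) := by
  refine ⟨(k.factorial : ℝ) * (m : ℝ) ^ k * (d : ℝ) ^ k * (max C₀ 1) ^ k, by positivity, ?_⟩
  intro τ μ N hμ hN Ω₁ Ω₂ hO1 _ _ hO2 _ _ f g hf hg hrange hfb Mg hMg u hu x hx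
  have hfo : ContDiffOn ℝ (k : ℕ) f Ω₁ := hf.mono subset_closure
  have hgo : ContDiffOn ℝ (k : ℕ) g Ω₂ := hg.mono subset_closure
  have hmaps : Set.MapsTo f Ω₁ Ω₂ := fun y hy => hrange ⟨y, subset_closure hy, rfl⟩
  have hgfo : ContDiffOn ℝ (k : ℕ) (g ∘ f) Ω₁ := hgo.comp hfo hmaps
  have hkpos : 0 < k := by omega
  have hk0 : (0:ℝ) < (k:ℝ) := by exact_mod_cast hkpos
  have hN0 : (0:ℝ) < N := lt_of_lt_of_le one_pos hN
  set E : ℝ := (k : ℝ) + μ * max 0 ((k : ℝ) - (τ : ℝ)) with hEdef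
  set q : ℝ := E / (k : ℝ) with hqdef
  set Dq : ℝ := (d : ℝ) * max C₀ 1 * N ^ q with hDdef
  have hfx : f x ∈ Ω₂ := hmaps hx
  set c : ℝ := g (f x) with hcdef
  set g₁ : (Fin m → ℝ) → ℝ := fun y => g y + (-c) with hg1def
  have hg1o : ContDiffOn ℝ (k : ℕ) g₁ Ω₂ := hgo.add contDiffOn_const
  have hMg0 : ∀ l ∈ Finset.Icc 1 k, 0 ≤ Mg l := by
    intro l hl
    rw [Finset.mem_Icc] at hl
    have hlen : (List.replicate l (⟨0, hm⟩ : Fin m)).length = l := List.length_replicate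
    have := hMg l hl.1 hl.2 (List.replicate l ⟨0, hm⟩) hlen (f x) hfx
    exact le_trans (abs_nonneg _) this
  set S : ℝ := ∑ l ∈ Finset.Icc 1 k, Mg l with hSdef
  have hS0 : 0 ≤ S := Finset.sum_nonneg hMg0
  set Cg : ℝ := (m : ℝ) ^ k * S with hCgdef
  have hCg0 : 0 ≤ Cg := by positivity
  -- bounds on the derivatives of g₁ at f x
  have hC : ∀ i, i ≤ k → ‖iteratedFDerivWithin ℝ i g₁ Ω₂ (f x)‖ ≤ Cg := by
    intro i hi
    rcases Nat.eq_zero_or_pos i with rfl | hi1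
    · rw [norm_iteratedFDerivWithin_zero]
      have : g₁ (f x) = 0 := by simp [hg1def, hcdef]
      rw [this, norm_zero]
      exact hCg0
    · have heq : iteratedFDerivWithin ℝ i g₁ Ω₂ (f x) = iteratedFDerivWithin ℝ i g Ω₂ (f x) := by
        rw [hg1def,
          iteratedFDerivWithin_add_apply' ((hgo.of_le (show ((i : ℕ) : WithTop ℕ∞) ≤ (k : ℕ) by exact_mod_cast hi)) (f x) hfx) contDiffWithinAt_const
            hO2.uniqueDiffOn hfx,
          iteratedFDerivWithin_const_of_ne (Nat.pos_iff_ne_zero.mp hi1) _ Ω₂, Pi.zero_apply,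
          add_zero]
      rw [heq, iteratedFDerivWithin_of_isOpen i hO2 hfx]
      have hMgi0 : 0 ≤ Mg i := hMg0 i (Finset.mem_Icc.mpr ⟨hi1, hi⟩)
      have hbasis : ∀ p : Fin i → Fin m,
          ‖iteratedFDeriv ℝ i g (f x) (fun j => Pi.single (p j) 1)‖ ≤ Mg i := by
        intro p
        rw [← multiDeriv_ofFn hO2 hgo i hi p (f x) hfx, Real.norm_eq_abs]
        exact hMg i hi1 hi (List.ofFn p) List.length_ofFn (f x) hfx
      refine (cmm_norm_le_of_basis _ hMgi0 hbasis).trans ?_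
      have h1 : (m : ℝ) ^ i ≤ (m : ℝ) ^ k :=
        pow_le_pow_right₀ (by exact_mod_cast hm) hi
      have h2 : Mg i ≤ S := Finset.single_le_sum hMg0 (Finset.mem_Icc.mpr ⟨hi1, hi⟩)
      calc (m : ℝ) ^ i * Mg i ≤ (m : ℝ) ^ k * S :=
            mul_le_mul h1 h2 hMgi0 (by positivity)
        _ = Cg := hCgdef.symm
  -- exponent comparison
  have hexp : ∀ i : ℕ, 1 ≤ i → i ≤ k →
      (i : ℝ) + μ * max 0 ((i : ℝ) - (τ : ℝ)) ≤ q * (i : ℝ) := by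
    intro i hi1 hik
    have hkey := key_exp i k τ hik
    have hkey2 : μ * ((k : ℝ) * max 0 ((i : ℝ) - τ)) ≤ μ * ((i : ℝ) * max 0 ((k : ℝ) - τ)) :=
      mul_le_mul_of_nonneg_left hkey hμ.le
    rw [hqdef, hEdef, div_mul_eq_mul_div, le_div_iff₀ hk0]
    nlinarith [hkey2]
  -- bounds on the derivatives of f at x
  have hDb : ∀ i, 1 ≤ i → i ≤ k → ‖iteratedFDerivWithin ℝ i f Ω₁ x‖ ≤ Dq ^ i := by
    intro i hi1 hik
    have hcoord : ∀ r : Fin m, ‖iteratedFDeriv ℝ i (fun y => f y r) x‖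
        ≤ (d : ℝ) ^ i * (C₀ * N ^ ((i : ℝ) + μ * max 0 ((i : ℝ) - (τ : ℝ)))) := by
      intro r
      have hcont : ContDiffOn ℝ (k : ℕ) (fun y => f y r) Ω₁ :=
        (ContinuousLinearMap.proj (R := ℝ) (φ := fun _ : Fin m => ℝ) r).contDiff.comp_contDiffOn hfo
      apply cmm_norm_le_of_basis _ (by positivity)
      intro p
      rw [← multiDeriv_ofFn hO1 hcont i hik p x hx, Real.norm_eq_abs]
      exact hfb i hi1 hik r (List.ofFn p) List.length_ofFn x hx
    have hfull : ‖iteratedFDerivWithin ℝ i f Ω₁ x‖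
        ≤ (d : ℝ) ^ i * (C₀ * N ^ ((i : ℝ) + μ * max 0 ((i : ℝ) - (τ : ℝ)))) := by
      apply ContinuousMultilinearMap.opNorm_le_bound (by positivity)
      intro v
      refine (pi_norm_le_iff_of_nonneg (by positivity)).mpr fun r => ?_
      have hpr : iteratedFDerivWithin ℝ i
            ((ContinuousLinearMap.proj (R := ℝ) (φ := fun _ : Fin m => ℝ) r) ∘ f) Ω₁ x
          = (ContinuousLinearMap.proj (R := ℝ) (φ := fun _ : Fin m => ℝ)
              r).compContinuousMultilinearMap (iteratedFDerivWithin ℝ i f Ω₁ x) :=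
        (ContinuousLinearMap.proj r).iteratedFDerivWithin_comp_left (hfo x hx) hO1.uniqueDiffOn hx
          (i := i) (by exact_mod_cast hik)
      have happ : (iteratedFDerivWithin ℝ i f Ω₁ x v) r
          = iteratedFDerivWithin ℝ i (fun y => f y r) Ω₁ x v := by
        calc (iteratedFDerivWithin ℝ i f Ω₁ x v) r
            = ((ContinuousLinearMap.proj (R := ℝ) (φ := fun _ : Fin m => ℝ)
                r).compContinuousMultilinearMap (iteratedFDerivWithin ℝ i f Ω₁ x)) v := rfl
          _ = iteratedFDerivWithin ℝ i
                ((ContinuousLinearMap.proj (R := ℝ) (φ := fun _ : Fin m => ℝ) r) ∘ f) Ω₁ x v := by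
              rw [hpr]
          _ = iteratedFDerivWithin ℝ i (fun y => f y r) Ω₁ x v := rfl
      rw [happ, iteratedFDerivWithin_of_isOpen i hO1 hx]
      calc ‖iteratedFDeriv ℝ i (fun y => f y r) x v‖
          ≤ ‖iteratedFDeriv ℝ i (fun y => f y r) x‖ * ∏ j, ‖v j‖ :=
            (iteratedFDeriv ℝ i (fun y => f y r) x).le_opNorm v
        _ ≤ (d : ℝ) ^ i * (C₀ * N ^ ((i : ℝ) + μ * max 0 ((i : ℝ) - (τ : ℝ)))) * ∏ j, ‖v j‖ :=
            mul_le_mul_of_nonneg_right (hcoord r)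
              (Finset.prod_nonneg fun j _ => norm_nonneg _)
    refine hfull.trans ?_
    have hq : N ^ ((i : ℝ) + μ * max 0 ((i : ℝ) - (τ : ℝ))) ≤ (N ^ q) ^ i := by
      rw [← Real.rpow_natCast (N ^ q) i, ← Real.rpow_mul hN0.le]
      exact Real.rpow_le_rpow_of_exponent_le hN (hexp i hi1 hik)
    have hc1 : C₀ ≤ (max C₀ 1) ^ i :=
      le_trans (le_max_left _ _) (le_self_pow₀ (le_max_right _ _) (by omega))
    calc (d : ℝ) ^ i * (C₀ * N ^ ((i : ℝ) + μ * max 0 ((i : ℝ) - (τ : ℝ))))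
        ≤ (d : ℝ) ^ i * ((max C₀ 1) ^ i * (N ^ q) ^ i) := by
          apply mul_le_mul_of_nonneg_left _ (by positivity)
          exact mul_le_mul hc1 hq (by positivity) (by positivity)
      _ = Dq ^ i := by rw [hDdef, mul_pow, mul_pow]; ring
  -- the composition estimate
  have main : ‖iteratedFDerivWithin ℝ k (g₁ ∘ f) Ω₁ x‖ ≤ (k.factorial : ℝ) * Cg * Dq ^ k :=
    norm_iteratedFDerivWithin_comp_le hg1o hfo le_rfl hO2.uniqueDiffOn hO1.uniqueDiffOn
      hmaps hx hC hDb
  have hgf_eq : (g ∘ f) = fun z => (g₁ ∘ f) z + c := by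
    funext z
    simp [hg1def, Function.comp]
  have hiter_eq : iteratedFDerivWithin ℝ k (g ∘ f) Ω₁ x
      = iteratedFDerivWithin ℝ k (g₁ ∘ f) Ω₁ x := by
    rw [hgf_eq,
      iteratedFDerivWithin_add_apply' ((hg1o.comp hfo hmaps) x hx) contDiffWithinAt_const
        hO1.uniqueDiffOn hx,
      iteratedFDerivWithin_const_of_ne (n := k) (by omega) _ Ω₁, Pi.zero_apply, add_zero]
  have hDqk : Dq ^ k = (d : ℝ) ^ k * (max C₀ 1) ^ k * N ^ E := by
    have hqk : q * (k : ℝ) = E := div_mul_cancel₀ E (ne_of_gt hk0)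
    rw [hDdef, mul_pow, mul_pow, ← Real.rpow_natCast (N ^ q) k, ← Real.rpow_mul hN0.le, hqk]
  calc |multiDeriv u (g ∘ f) x|
      ≤ ‖iteratedFDeriv ℝ u.length (g ∘ f) x‖ :=
        abs_multiDeriv_le_norm hO1 hgfo u (hu ▸ le_rfl) hx
    _ = ‖iteratedFDerivWithin ℝ k (g ∘ f) Ω₁ x‖ := by
        rw [hu, ← iteratedFDerivWithin_of_isOpen k hO1 hx]
    _ = ‖iteratedFDerivWithin ℝ k (g₁ ∘ f) Ω₁ x‖ := by rw [hiter_eq]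
    _ ≤ (k.factorial : ℝ) * Cg * Dq ^ k := main
    _ = (k.factorial : ℝ) * (m : ℝ) ^ k * (d : ℝ) ^ k * (max C₀ 1) ^ k * S * N ^ E := by
        rw [hDqk, hCgdef]; ring
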